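/- Let A be a ring, f, g ∈ A with A g-torsion free and A/gA of bounded f^∞-torsion, and let M be a bounded A-module (g-torsion free with M/gM of bounded f^∞-torsion). Then the sequence 0 → M →(g) M → M/gM → 0 remains exact after classical (f,g)-adic completion: 0 → M̂ →(g) M̂ → (M/gM)^∧ → 0 is exact, where completions are (f,g)-adic (and f-adic for M/gM). In particular the classical completion M̂ is g-torsion free. -/

import Mathlib

open Submodule

section Aux

variable {A : Type*} [CommRing A] (f g : A) {M : Type*} [AddCommGroup M] [Module A M]

lemma aux_split (n : ℕ) :
    ((Ideal.span {f, g}) ^ (n + 1) • ⊤ : Submodule A M) ≤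
      LinearMap.range (LinearMap.lsmul A M (f ^ (n + 1))) ⊔
        Submodule.map (LinearMap.lsmul A M g) ((Ideal.span {f, g}) ^ n • ⊤) := by
  induction n with
  | zero =>
    refine Submodule.smul_le.2 fun a ha m _ => ?_
    rw [pow_one] at ha
    obtain ⟨c₁, c₂, h⟩ := Ideal.mem_span_pair.mp ha
    have : a • m = f ^ 1 • (c₁ • m) + g • (c₂ • m) := by
      rw [← h]; simp [add_smul, mul_smul, pow_one, smul_comm f c₁, smul_comm g c₂]
    rw [this]
    refine Submodule.add_mem_sup ⟨c₁ • m, rfl⟩ ?_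
    exact ⟨c₂ • m, by simp, rfl⟩
  | succ n ih =>
    have hpow : (Ideal.span {f, g}) ^ (n + 2) = Ideal.span {f, g} * (Ideal.span {f, g}) ^ (n + 1) :=
      (pow_succ' _ _)
    rw [hpow, ← Ideal.smul_eq_mul, Submodule.smul_assoc]
    refine Submodule.smul_le.2 fun a ha x hx => ?_
    obtain ⟨c₁, c₂, h⟩ := Ideal.mem_span_pair.mp ha
    rcases Submodule.mem_sup.1 (ih hx) with ⟨p, hp, q, hq, rfl⟩
    obtain ⟨m', rfl⟩ := hp
    obtain ⟨z, hz, rfl⟩ := hq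
    simp only [LinearMap.lsmul_apply] at *
    have e : a • (f ^ (n + 1) • m' + g • z)
        = f ^ (n + 2) • (c₁ • m') + g • (f ^ (n + 1) • (c₂ • m') + a • z) := by
      rw [← h]
      simp only [smul_add, add_smul, mul_smul]
      ring_nf
      module
    rw [e]
    refine Submodule.add_mem_sup ⟨c₁ • m', rfl⟩ ?_
    refine ⟨f ^ (n + 1) • (c₂ • m') + a • z, ?_, rfl⟩
    have hrw : ((Ideal.span {f, g}) ^ (n + 1) • ⊤ : Submodule A M)
        = Ideal.span {f, g} • ((Ideal.span {f, g}) ^ n • ⊤ : Submodule A M) := by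
      rw [pow_succ', ← Ideal.smul_eq_mul, Submodule.smul_assoc]
    refine add_mem (Submodule.smul_mem_smul (Ideal.pow_mem_pow (Ideal.subset_span (by simp)) _)
      trivial) ?_
    rw [hrw]
    exact Submodule.smul_mem_smul ha hz

lemma aux_gmem (m : M) : g • m ∈ (Ideal.span {g} • ⊤ : Submodule A M) :=
  Submodule.smul_mem_smul (Ideal.subset_span rfl) trivial

lemma aux_gmem' {x : M} (hx : x ∈ (Ideal.span {g} • ⊤ : Submodule A M)) : ∃ u : M, g • u = x := by
  refine Submodule.smul_induction_on hx (fun a ha m _ => ?_) ?_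
  · obtain ⟨c, rfl⟩ := Ideal.mem_span_singleton'.mp ha
    exact ⟨c • m, by rw [mul_smul] ; rw [smul_comm]⟩
  · rintro x y ⟨u, rfl⟩ ⟨v, rfl⟩
    exact ⟨u + v, by rw [smul_add]⟩

/-- The key Artin–Rees type lemma. -/
lemma aux_key (N₀ : ℕ)
    (hMg : ∀ m : M, g • m = 0 → m = 0)
    (hM : ∀ x : M ⧸ (Ideal.span {g} • ⊤ : Submodule A M),
      (∃ k : ℕ, f ^ k • x = 0) → f ^ N₀ • x = 0)
    (n : ℕ) (m : M) (h : g • m ∈ ((Ideal.span {f, g}) ^ (n + (N₀ + 1)) • ⊤ : Submodule A M)) :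
    m ∈ ((Ideal.span {f, g}) ^ n • ⊤ : Submodule A M) := by
  have h2 : g • m ∈ ((Ideal.span {f, g}) ^ ((n + N₀) + 1) • ⊤ : Submodule A M) := h
  rcases Submodule.mem_sup.1 (aux_split f g (n + N₀) h2) with ⟨p, hp, q, hq, hpq⟩
  obtain ⟨m', rfl⟩ := hp
  obtain ⟨z, hz, rfl⟩ := hq
  simp only [LinearMap.lsmul_apply] at hpq
  -- f^(n+N₀+1) • m' = g • (m - z)
  have hfm : f ^ (n + N₀ + 1) • m' = g • (m - z) := by
    rw [smul_sub, ← hpq]; abel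
  have hq0 : f ^ N₀ • (Submodule.Quotient.mk m' : M ⧸ (Ideal.span {g} • ⊤ : Submodule A M)) = 0 := by
    refine hM _ ⟨n + N₀ + 1, ?_⟩
    rw [← Submodule.Quotient.mk_smul, Submodule.Quotient.mk_eq_zero, hfm]
    exact aux_gmem g _
  rw [← Submodule.Quotient.mk_smul, Submodule.Quotient.mk_eq_zero] at hq0
  obtain ⟨m'', hm''⟩ := aux_gmem' g hq0
  have : g • (m - z - f ^ (n + 1) • m'') = 0 := by
    have : f ^ (n + N₀ + 1) • m' = f ^ (n + 1) • (f ^ N₀ • m') := by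
      rw [← mul_smul, ← pow_add]; ring_nf
    rw [smul_sub, ← hfm, this, ← hm'']
    rw [smul_comm g (f ^ (n+1)) m'', sub_self]
  have hms := hMg _ this
  have hmz : m = z + f ^ (n + 1) • m'' := by
    have := sub_eq_zero.mp hms; linear_combination (norm := module) this
  rw [hmz]
  refine add_mem (Submodule.smul_mono_left (Ideal.pow_le_pow_right (by omega)) hz) ?_
  exact Submodule.smul_mono_left (Ideal.pow_le_pow_right (by omega))
    (Submodule.smul_mem_smul (Ideal.pow_mem_pow (Ideal.subset_span (by simp)) _) trivial)

end Aux

lemma AdicCompletion.transitionMap_mk {A : Type*} [CommRing A] {I : Ideal A} {M : Type*}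
    [AddCommGroup M] [Module A M] {m n : ℕ} (hmn : m ≤ n) (x : M) :
    AdicCompletion.transitionMap I M hmn
        (Submodule.Quotient.mk x : M ⧸ (I ^ n • ⊤ : Submodule A M)) =
      (Submodule.Quotient.mk x : M ⧸ (I ^ m • ⊤ : Submodule A M)) := rfl



/-- If `A` is bounded (`g`-torsion free with `A/gA` of bounded `f^∞`-torsion) and `M` is a
bounded `A`-module (`g`-torsion free with `M/gM` of bounded `f^∞`-torsion), then the
sequence `0 → M →(g) M → M/gM → 0` stays exact after classical `(f,g)`-adic completion;
in particular the completion of `M` is `g`-torsion free. -/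
theorem stmt17 (A : Type*) [CommRing A] (f g : A)
    (M : Type*) [AddCommGroup M] [Module A M]
    (hAg : ∀ a : A, g * a = 0 → a = 0)
    (hA : ∃ N : ℕ, ∀ x : A ⧸ Ideal.span {g}, (∃ k : ℕ, f ^ k • x = 0) → f ^ N • x = 0)
    (hMg : ∀ m : M, g • m = 0 → m = 0)
    (hM : ∃ N : ℕ, ∀ x : M ⧸ (Ideal.span {g} • ⊤ : Submodule A M),
      (∃ k : ℕ, f ^ k • x = 0) → f ^ N • x = 0) :
    Function.Injective
        (LinearMap.lsmul A (AdicCompletion (Ideal.span {f, g}) M) g) ∧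
      Function.Exact
        (LinearMap.lsmul A (AdicCompletion (Ideal.span {f, g}) M) g)
        (AdicCompletion.map (Ideal.span {f, g})
          (Ideal.span {g} • ⊤ : Submodule A M).mkQ) ∧
      Function.Surjective
        (AdicCompletion.map (Ideal.span {f, g})
          (Ideal.span {g} • ⊤ : Submodule A M).mkQ) := by
  classical
  obtain ⟨N₀, hMb⟩ := hM
  have key := aux_key f g N₀ hMg hMb
  set I := Ideal.span ({f, g} : Set A) with hIdef
  set S : Submodule A M := Ideal.span {g} • ⊤ with hSdef
  set N' := N₀ + 1 with hN'
  refine ⟨?_, ?_, AdicCompletion.map_surjective I (Submodule.mkQ_surjective S)⟩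
  · rw [injective_iff_map_eq_zero]
    intro x hx
    have hx' : ∀ k, g • (x.val k) = 0 := fun k => by
      have h0 := congrArg (fun z : AdicCompletion I M => z.val k) hx
      simpa [AdicCompletion.val_smul] using h0
    ext n
    obtain ⟨m, hm⟩ := Submodule.Quotient.mk_surjective _ (x.val (n + N'))
    have hg : g • m ∈ (I ^ (n + N') • ⊤ : Submodule A M) := by
      refine (Submodule.Quotient.mk_eq_zero _).1 ?_
      rw [Submodule.Quotient.mk_smul, hm]
      exact hx' _
    have hmem := key n m hg
    have hcomp := x.property (show n ≤ n + N' by omega)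
    rw [← hm, AdicCompletion.transitionMap_mk] at hcomp
    rw [← hcomp]
    exact (Submodule.Quotient.mk_eq_zero _).2 hmem
  · intro y
    constructor
    · intro h0
      have hex : ∀ k, ∃ u vw, vw ∈ (I ^ k • ⊤ : Submodule A M) ∧
          (Submodule.Quotient.mk (g • u + vw) : M ⧸ (I ^ k • ⊤ : Submodule A M)) = y.val k := by
        intro k
        obtain ⟨m, hm⟩ := Submodule.Quotient.mk_surjective _ (y.val k)
        have h1 : (AdicCompletion.map I S.mkQ y).val k = 0 := by rw [h0]; rfl
        rw [AdicCompletion.map_val_apply, ← hm, LinearMap.reduceModIdeal_apply,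
          Submodule.Quotient.mk_eq_zero] at h1
        have h2 : (I ^ k • ⊤ : Submodule A (M ⧸ S)) = Submodule.map S.mkQ (I ^ k • ⊤) := by
          rw [Submodule.map_smul'', Submodule.map_top, Submodule.range_mkQ]
        rw [h2] at h1
        obtain ⟨vw, hvw, hww⟩ := h1
        have hms : m - vw ∈ S := by
          have : (Submodule.Quotient.mk m : M ⧸ S) = Submodule.Quotient.mk vw := hww.symm
          exact (Submodule.Quotient.eq S).mp this
        obtain ⟨u, hu⟩ := aux_gmem' g hms
        refine ⟨u, vw, hvw, ?_⟩
        rw [hu, sub_add_cancel, hm]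
      choose u w hw hmk using hex
      refine ⟨⟨fun n => Submodule.Quotient.mk (u (n + N')), ?_⟩, ?_⟩
      · intro a b hab
        rw [AdicCompletion.transitionMap_mk, Submodule.Quotient.eq]
        apply key
        have hdiff : (g • u (b + N') + w (b + N')) - (g • u (a + N') + w (a + N'))
            ∈ (I ^ (a + N') • ⊤ : Submodule A M) := by
          rw [← Submodule.Quotient.eq]
          have hy := y.property (show a + N' ≤ b + N' by omega)
          calc (Submodule.Quotient.mk (g • u (b + N') + w (b + N'))
                : M ⧸ (I ^ (a + N') • ⊤ : Submodule A M))
              = AdicCompletion.transitionMap I M (show a + N' ≤ b + N' by omega)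
                  (Submodule.Quotient.mk (g • u (b + N') + w (b + N'))) := by
                rw [AdicCompletion.transitionMap_mk]
            _ = AdicCompletion.transitionMap I M (show a + N' ≤ b + N' by omega)
                  (y.val (b + N')) := by rw [hmk]
            _ = y.val (a + N') := hy
            _ = Submodule.Quotient.mk (g • u (a + N') + w (a + N')) := (hmk _).symm
        have hrep : g • (u (b + N') - u (a + N')) =
            ((g • u (b + N') + w (b + N')) - (g • u (a + N') + w (a + N')))
              - w (b + N') + w (a + N') := by
          rw [smul_sub]; abel
        rw [hrep]
        refine add_mem (sub_mem hdiff ?_) ?_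
        · exact Submodule.smul_mono_left (Ideal.pow_le_pow_right (by omega)) (hw _)
        · exact hw _
      · apply AdicCompletion.ext
        intro n
        have h1 : (Submodule.Quotient.mk (g • u (n + N') + w (n + N'))
            : M ⧸ (I ^ n • ⊤ : Submodule A M)) = y.val n := by
          have hy := y.property (show n ≤ n + N' by omega)
          calc (Submodule.Quotient.mk (g • u (n + N') + w (n + N'))
                : M ⧸ (I ^ n • ⊤ : Submodule A M))
              = AdicCompletion.transitionMap I M (show n ≤ n + N' by omega)
                  (Submodule.Quotient.mk (g • u (n + N') + w (n + N'))) := by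
                rw [AdicCompletion.transitionMap_mk]
            _ = AdicCompletion.transitionMap I M (show n ≤ n + N' by omega)
                  (y.val (n + N')) := by rw [hmk]
            _ = y.val n := hy
        have h2 : (Submodule.Quotient.mk (w (n + N'))
            : M ⧸ (I ^ n • ⊤ : Submodule A M)) = 0 :=
          (Submodule.Quotient.mk_eq_zero _).2
            (Submodule.smul_mono_left (Ideal.pow_le_pow_right (by omega)) (hw _))
        show g • (Submodule.Quotient.mk (u (n + N')) : M ⧸ (I ^ n • ⊤ : Submodule A M))
            = y.val n
        have h3 : (Submodule.Quotient.mk (g • u (n + N')) : M ⧸ (I ^ n • ⊤ : Submodule A M))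
            = Submodule.Quotient.mk (g • u (n + N') + w (n + N')) := by
          rw [Submodule.Quotient.mk_add, h2, add_zero]
        rw [← Submodule.Quotient.mk_smul, h3, h1]
    · rintro ⟨x, rfl⟩
      ext n
      obtain ⟨m, hm⟩ := Submodule.Quotient.mk_surjective _ (x.val n)
      have hval : ((LinearMap.lsmul A (AdicCompletion I M) g) x).val n
          = Submodule.Quotient.mk (g • m) := by
        rw [LinearMap.lsmul_apply, AdicCompletion.val_smul_apply, ← hm, ← Submodule.Quotient.mk_smul]
      rw [AdicCompletion.map_val_apply, hval, LinearMap.reduceModIdeal_apply]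
      have h4 : S.mkQ (g • m) = 0 := (Submodule.Quotient.mk_eq_zero _).2 (aux_gmem g m)
      rw [h4]
      simp
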